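/- Let q, q' ∈ (ℝ^k)^N with q ≠ q', let p, p' ∈ (ℝ^k)^N, let t > 0, and let C ⊆ (ℝ^k)^N be an open convex set containing both q and q'. Then for every v ≥ ‖q − q'‖_m²/t and every ε > 0 there exists a continuous, piecewise continuously differentiable path φ : [0,t] → C with φ(0) = q, φ(t) = q', right derivative p at 0, left derivative p' at t, and | ∫₀^t ‖φ'(u)‖_m² du − v | < ε. -/

import Mathlib

open Set


set_option maxHeartbeats 1600000

noncomputable section

/-- Configuration space of `N` particles in `ℝ^k`. -/
abbrev Qs (N k : ℕ) : Type := Fin N → Fin k → ℝ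

/-- Kinetic norm squared `‖p‖_m² = ∑ᵢ |pᵢ|²/mᵢ`. -/
def kinSq {N k : ℕ} (m : Fin N → ℝ) (p : Qs N k) : ℝ := ∑ i, (∑ l, (p i l) ^ 2) / m i

lemma kinSq_nonneg {N k : ℕ} {m : Fin N → ℝ} (hm : ∀ i, 0 < m i) (p : Qs N k) :
    0 ≤ kinSq m p :=
  Finset.sum_nonneg fun i _ =>
    div_nonneg (Finset.sum_nonneg fun l _ => sq_nonneg _) (hm i).le

lemma kinSq_neg {N k : ℕ} (m : Fin N → ℝ) (p : Qs N k) : kinSq m (-p) = kinSq m p := by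
  simp [kinSq]

lemma kinSq_smul {N k : ℕ} (m : Fin N → ℝ) (c : ℝ) (p : Qs N k) :
    kinSq m (c • p) = c ^ 2 * kinSq m p := by
  unfold kinSq
  rw [Finset.mul_sum]
  refine Finset.sum_congr rfl fun i _ => ?_
  rw [← mul_div_assoc]
  congr 1
  rw [Finset.mul_sum]
  refine Finset.sum_congr rfl fun l _ => ?_
  simp [mul_pow]

lemma kinSq_zero {N k : ℕ} (m : Fin N → ℝ) : kinSq m (0 : Qs N k) = 0 := by
  simp [kinSq]

lemma kinSq_pos {N k : ℕ} {m : Fin N → ℝ} (hm : ∀ i, 0 < m i) {p : Qs N k} (hp : p ≠ 0) :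
    0 < kinSq m p := by
  have h : ∃ i, p i ≠ 0 := by
    by_contra h
    push_neg at h
    exact hp (funext fun i => h i)
  obtain ⟨i, hi⟩ := h
  have h2 : ∃ l, p i l ≠ 0 := by
    by_contra h
    push_neg at h
    exact hi (funext fun l => h l)
  obtain ⟨l, hl⟩ := h2
  refine Finset.sum_pos' (fun j _ => div_nonneg (Finset.sum_nonneg fun l _ => sq_nonneg _) (hm j).le) ⟨i, Finset.mem_univ i, ?_⟩
  refine div_pos ?_ (hm i)
  refine Finset.sum_pos' (fun l _ => sq_nonneg _) ⟨l, Finset.mem_univ l, ?_⟩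
  positivity

lemma ae_nmem_finset (S : Finset ℝ) : ∀ᵐ u : ℝ, u ∉ (S : Set ℝ) :=
  MeasureTheory.measure_eq_zero_iff_ae_notMem.mp (S.finite_toSet.measure_zero _)

lemma intervalIntegrable_of_eqOn_Ioc {f : ℝ → ℝ} {a b c : ℝ} (hab : a ≤ b)
    (h : ∀ u ∈ Ioc a b, f u = c) : IntervalIntegrable f MeasureTheory.volume a b := by
  refine (intervalIntegrable_const (c := c)).congr_ae ?_
  filter_upwards [MeasureTheory.ae_restrict_mem measurableSet_uIoc] with u hu
  exact (h u (by rwa [uIoc_of_le hab] at hu)).symm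

lemma integral_of_eqOn_Ioc {f : ℝ → ℝ} {a b c : ℝ} (hab : a ≤ b)
    (h : ∀ u ∈ Ioc a b, f u = c) : ∫ u in a..b, f u = (b - a) * c := by
  rw [intervalIntegral.integral_congr_ae (g := fun _ => c)
    (Filter.Eventually.of_forall fun u hu => h u (by rwa [uIoc_of_le hab] at hu)),
    intervalIntegral.integral_const, smul_eq_mul]

/-- reachability construction: for any `v ≥ ‖q−q'‖_m²/t` and `ε > 0` there
is a continuous, piecewise `C¹` path in the convex open set `C` from `q` to `q'` on `[0,t]`,
with prescribed one-sided derivatives `p` at `0` and `p'` at `t`, whose energy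
`∫₀^t ‖φ'(u)‖_m² du` is within `ε` of `v`. -/
theorem exists_piecewise_path_with_prescribed_energy
    (N k : ℕ) (hN : 1 ≤ N) (hk : 1 ≤ k)
    (m : Fin N → ℝ) (hm : ∀ i, 0 < m i)
    (q q' p p' : Qs N k) (hqq' : q ≠ q')
    (t : ℝ) (ht : 0 < t)
    (C : Set (Qs N k)) (hCopen : IsOpen C) (hCconv : Convex ℝ C)
    (hq : q ∈ C) (hq' : q' ∈ C)
    (v : ℝ) (hv : kinSq m (q - q') / t ≤ v) (ε : ℝ) (hε : 0 < ε) :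
    ∃ (φ : ℝ → Qs N k) (F : Finset ℝ),
      ContinuousOn φ (Icc 0 t) ∧
      (∀ u ∈ Icc (0:ℝ) t, φ u ∈ C) ∧
      (∀ u ∈ Icc (0:ℝ) t, u ∉ F → DifferentiableAt ℝ φ u) ∧
      ContinuousOn (deriv φ) (Icc 0 t \ ↑F) ∧
      φ 0 = q ∧ φ t = q' ∧
      HasDerivWithinAt φ p (Ici 0) 0 ∧
      HasDerivWithinAt φ p' (Iic t) t ∧
      |(∫ u in (0:ℝ)..t, kinSq m (deriv φ u)) - v| < ε := by
  classical
  set K := kinSq m (q - q') with hKdef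
  have hqq : q - q' ≠ 0 := sub_ne_zero.mpr hqq'
  have hK : 0 < K := kinSq_pos hm hqq
  set A := kinSq m p with hAdef
  set A' := kinSq m p' with hA'def
  have hA : 0 ≤ A := kinSq_nonneg hm p
  have hA' : 0 ≤ A' := kinSq_nonneg hm p'
  obtain ⟨r, hr, hball⟩ := Metric.isOpen_iff.mp hCopen q hq
  obtain ⟨r', hr', hball'⟩ := Metric.isOpen_iff.mp hCopen q' hq'
  set δ := min (min (t/8) (ε*t^2/(32*K)))
      (min (ε/(8*(A+A'+1))) (min (r/(2*(‖p‖+1))) (r'/(2*(‖p'‖+1))))) with hδdef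
  have hδ : 0 < δ := by
    refine lt_min (lt_min (by positivity) (by positivity))
      (lt_min (by positivity) (lt_min (by positivity) (by positivity)))
  have hδ1 : δ ≤ t/8 := le_trans (min_le_left _ _) (min_le_left _ _)
  have hδ2 : δ ≤ ε*t^2/(32*K) := le_trans (min_le_left _ _) (min_le_right _ _)
  have hδ3 : δ ≤ ε/(8*(A+A'+1)) := le_trans (min_le_right _ _) (min_le_left _ _)
  have hδ4 : δ ≤ r/(2*(‖p‖+1)) :=
    le_trans (min_le_right _ _) (le_trans (min_le_right _ _) (min_le_left _ _))
  have hδ5 : δ ≤ r'/(2*(‖p'‖+1)) :=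
    le_trans (min_le_right _ _) (le_trans (min_le_right _ _) (min_le_right _ _))
  set e := 2*δ*(A+A') with hedef
  have he0 : 0 ≤ e := by positivity
  have heε : e ≤ ε/4 := by
    have h3 : δ * (8*(A+A'+1)) ≤ ε := (le_div_iff₀ (by positivity)).mp hδ3
    nlinarith [hδ.le]
  set τ := t - 4*δ with hτdef
  have hτ2 : t/2 ≤ τ := by rw [hτdef]; linarith
  have hτpos : 0 < τ := by linarith
  have hKτ : K/τ ≤ K/t + ε/4 := by
    have h2 : δ*(32*K) ≤ ε*t^2 := (le_div_iff₀ (by positivity)).mp hδ2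
    rw [div_add_div _ _ ht.ne' (by norm_num : (4:ℝ) ≠ 0), div_le_div_iff₀ hτpos (by positivity),
      hτdef]
    nlinarith [mul_nonneg (mul_nonneg hε.le ht.le) (by linarith : (0:ℝ) ≤ t/8 - δ)]
  set E := max (v - e) (K/τ) with hEdef
  have hEK : K/τ ≤ E := le_max_right _ _
  have hEve : v - e ≤ E := le_max_left _ _
  have hE : 0 < E := lt_of_lt_of_le (div_pos hK hτpos) hEK
  set s := K/E with hsdef
  have hs : 0 < s := div_pos hK hE
  have hsτ : s ≤ τ := by
    rw [hsdef, div_le_iff₀ hE]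
    have h := mul_le_mul_of_nonneg_right hEK hτpos.le
    rw [div_mul_cancel₀ _ hτpos.ne'] at h
    linarith
  have hKs : K/s = E := by
    rw [hsdef, div_div_eq_mul_div, mul_comm, mul_div_assoc, div_self hK.ne', mul_one]
  have ho3 : 2*δ + s ≤ t - 2*δ := by rw [hτdef] at hsτ; linarith
  have hδt : δ < t := by linarith
  -- the path
  set φ : ℝ → Qs N k := fun u =>
    if u ≤ δ then q + u • p
    else if u ≤ 2*δ then q + (2*δ - u) • p
    else if u ≤ 2*δ + s then q + ((u - 2*δ)/s) • (q' - q)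
    else if u ≤ t - 2*δ then q'
    else if u ≤ t - δ then q' + (t - 2*δ - u) • p'
    else q' + (u - t) • p' with hφdef
  -- branch equalities
  have hb1 : ∀ u : ℝ, u ≤ δ → φ u = q + u • p := by
    intro u hu; simp only [hφdef]; rw [if_pos hu]
  have hb2 : ∀ u : ℝ, δ < u → u ≤ 2*δ → φ u = q + (2*δ - u) • p := by
    intro u h1 h2; simp only [hφdef]; rw [if_neg (not_le.mpr h1), if_pos h2]
  have hb3 : ∀ u : ℝ, 2*δ < u → u ≤ 2*δ + s → φ u = q + ((u - 2*δ)/s) • (q' - q) := by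
    intro u h1 h2; simp only [hφdef]
    rw [if_neg (by push_neg; linarith), if_neg (not_le.mpr h1), if_pos h2]
  have hb4 : ∀ u : ℝ, 2*δ + s < u → u ≤ t - 2*δ → φ u = q' := by
    intro u h1 h2; simp only [hφdef]
    rw [if_neg (by push_neg; linarith), if_neg (by push_neg; linarith),
      if_neg (not_le.mpr h1), if_pos h2]
  have hb5 : ∀ u : ℝ, t - 2*δ < u → u ≤ t - δ → φ u = q' + (t - 2*δ - u) • p' := by
    intro u h1 h2; simp only [hφdef]
    rw [if_neg (by push_neg; linarith), if_neg (by push_neg; linarith),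
      if_neg (by push_neg; linarith), if_neg (not_le.mpr h1), if_pos h2]
  have hb6 : ∀ u : ℝ, t - δ < u → φ u = q' + (u - t) • p' := by
    intro u h1; simp only [hφdef]
    rw [if_neg (by push_neg; linarith), if_neg (by push_neg; linarith),
      if_neg (by push_neg; linarith), if_neg (by push_neg; linarith),
      if_neg (not_le.mpr h1)]
  -- continuity
  have hφcont : Continuous φ := by
    rw [hφdef]
    refine Continuous.if_le ?_ ?_ continuous_id continuous_const ?_
    · exact continuous_const.add (continuous_id.smul continuous_const)
    · refine Continuous.if_le ?_ ?_ continuous_id continuous_const ?_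
      · exact continuous_const.add ((continuous_const.sub continuous_id).smul continuous_const)
      · refine Continuous.if_le ?_ ?_ continuous_id continuous_const ?_
        · exact continuous_const.add
            (((continuous_id.sub continuous_const).div_const s).smul continuous_const)
        · refine Continuous.if_le ?_ ?_ continuous_id continuous_const ?_
          · exact continuous_const
          · refine Continuous.if_le ?_ ?_ continuous_id continuous_const ?_
            · exact continuous_const.add ((continuous_const.sub continuous_id).smul continuous_const)
            · exact continuous_const.add ((continuous_id.sub continuous_const).smul continuous_const)
            · intro u hu; rw [hu]
              rw [show t - 2*δ - (t - δ) = (t - δ) - t by ring]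
          · intro u hu; rw [hu]
            rw [if_pos (by linarith : t - 2*δ ≤ t - δ)]
            rw [show t - 2*δ - (t - 2*δ) = 0 by ring, zero_smul, add_zero]
        · intro u hu; rw [hu]
          rw [if_pos ho3]
          rw [show 2*δ + s - 2*δ = s by ring, div_self hs.ne', one_smul,
            add_sub_cancel]
      · intro u hu; rw [hu]
        rw [if_pos (by linarith : 2*δ ≤ 2*δ + s)]
        rw [show 2*δ - 2*δ = 0 by ring, zero_smul, add_zero, zero_div, zero_smul, add_zero]
    · intro u hu; rw [hu]
      rw [if_pos (by linarith : δ ≤ 2*δ), show 2*δ - δ = δ by ring]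
  -- derivatives on the open regions
  have hd1 : ∀ w ∈ Iio δ, HasDerivAt φ p w := by
    intro w hw
    have hL : HasDerivAt (fun u : ℝ => q + u • p) p w := by
      simpa using ((hasDerivAt_id w).smul_const p).const_add q
    exact hL.congr_of_eventuallyEq
      (Filter.eventually_of_mem (Iio_mem_nhds hw) fun x hx => hb1 x (le_of_lt hx))
  have hd2 : ∀ w ∈ Ioo δ (2*δ), HasDerivAt φ (-p) w := by
    intro w hw
    have hL : HasDerivAt (fun u : ℝ => q + (2*δ - u) • p) (-p) w := by
      simpa using (((hasDerivAt_id w).const_sub (2*δ)).smul_const p).const_add q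
    exact hL.congr_of_eventuallyEq
      (Filter.eventually_of_mem (Ioo_mem_nhds hw.1 hw.2) fun x hx => hb2 x hx.1 hx.2.le)
  have hd3 : ∀ w ∈ Ioo (2*δ) (2*δ+s), HasDerivAt φ ((1/s) • (q' - q)) w := by
    intro w hw
    have hL : HasDerivAt (fun u : ℝ => q + ((u - 2*δ)/s) • (q' - q)) ((1/s) • (q' - q)) w := by
      simpa [one_div] using
        ((((hasDerivAt_id w).sub_const (2*δ)).div_const s).smul_const (q' - q)).const_add q
    exact hL.congr_of_eventuallyEq
      (Filter.eventually_of_mem (Ioo_mem_nhds hw.1 hw.2) fun x hx => hb3 x hx.1 hx.2.le)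
  have hd4 : ∀ w ∈ Ioo (2*δ+s) (t-2*δ), HasDerivAt φ 0 w := by
    intro w hw
    exact (hasDerivAt_const w q').congr_of_eventuallyEq
      (Filter.eventually_of_mem (Ioo_mem_nhds hw.1 hw.2) fun x hx => hb4 x hx.1 hx.2.le)
  have hd5 : ∀ w ∈ Ioo (t-2*δ) (t-δ), HasDerivAt φ (-p') w := by
    intro w hw
    have hL : HasDerivAt (fun u : ℝ => q' + (t - 2*δ - u) • p') (-p') w := by
      simpa using (((hasDerivAt_id w).const_sub (t - 2*δ)).smul_const p').const_add q'
    exact hL.congr_of_eventuallyEq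
      (Filter.eventually_of_mem (Ioo_mem_nhds hw.1 hw.2) fun x hx => hb5 x hx.1 hx.2.le)
  have hd6 : ∀ w ∈ Ioi (t-δ), HasDerivAt φ p' w := by
    intro w hw
    have hL : HasDerivAt (fun u : ℝ => q' + (u - t) • p') p' w := by
      simpa using (((hasDerivAt_id w).sub_const t).smul_const p').const_add q'
    exact hL.congr_of_eventuallyEq
      (Filter.eventually_of_mem (Ioi_mem_nhds hw) fun x hx => hb6 x hx)
  set F : Finset ℝ := {δ, 2*δ, 2*δ+s, t-2*δ, t-δ} with hFdef
  have hkey : ∀ u : ℝ, u ∉ F → ∃ c : Qs N k, ∀ᶠ w in nhds u, HasDerivAt φ c w := by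
    intro u huF
    simp only [hFdef, Finset.mem_insert, Finset.mem_singleton, not_or] at huF
    obtain ⟨n1, n2, n3, n4, n5⟩ := huF
    rcases lt_or_gt_of_ne n1 with h | h
    · exact ⟨p, Filter.eventually_of_mem (Iio_mem_nhds h) hd1⟩
    · rcases lt_or_gt_of_ne n2 with h2 | h2
      · exact ⟨-p, Filter.eventually_of_mem (Ioo_mem_nhds h h2) hd2⟩
      · rcases lt_or_gt_of_ne n3 with h3 | h3
        · exact ⟨(1/s) • (q' - q), Filter.eventually_of_mem (Ioo_mem_nhds h2 h3) hd3⟩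
        · rcases lt_or_gt_of_ne n4 with h4 | h4
          · exact ⟨0, Filter.eventually_of_mem (Ioo_mem_nhds h3 h4) hd4⟩
          · rcases lt_or_gt_of_ne n5 with h5 | h5
            · exact ⟨-p', Filter.eventually_of_mem (Ioo_mem_nhds h4 h5) hd5⟩
            · exact ⟨p', Filter.eventually_of_mem (Ioi_mem_nhds h5) hd6⟩
  refine ⟨φ, F, hφcont.continuousOn, ?_, ?_, ?_, ?_, ?_, ?_, ?_, ?_⟩
  · -- membership in C
    have hδ4' : δ*(2*(‖p‖+1)) ≤ r := (le_div_iff₀ (by positivity)).mp hδ4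
    have hδ5' : δ*(2*(‖p'‖+1)) ≤ r' := (le_div_iff₀ (by positivity)).mp hδ5
    have hmem1 : ∀ c : ℝ, |c| ≤ δ → q + c • p ∈ C := by
      intro c hc
      apply hball
      rw [Metric.mem_ball, dist_eq_norm, add_sub_cancel_left, norm_smul, Real.norm_eq_abs]
      have := mul_le_mul_of_nonneg_right hc (norm_nonneg p)
      nlinarith [norm_nonneg p, abs_nonneg c, mul_nonneg hδ.le (norm_nonneg p), hδ]
    have hmem2 : ∀ c : ℝ, |c| ≤ δ → q' + c • p' ∈ C := by
      intro c hc
      apply hball'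
      rw [Metric.mem_ball, dist_eq_norm, add_sub_cancel_left, norm_smul, Real.norm_eq_abs]
      have := mul_le_mul_of_nonneg_right hc (norm_nonneg p')
      nlinarith [norm_nonneg p', abs_nonneg c, mul_nonneg hδ.le (norm_nonneg p'), hδ]
    intro u hu
    obtain ⟨hu0, hut⟩ := mem_Icc.mp hu
    rcases le_or_gt u δ with h1 | h1
    · rw [hb1 u h1]; exact hmem1 u (abs_le.mpr ⟨by linarith, h1⟩)
    · rcases le_or_gt u (2*δ) with h2 | h2
      · rw [hb2 u h1 h2]; exact hmem1 _ (abs_le.mpr ⟨by linarith, by linarith⟩)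
      · rcases le_or_gt u (2*δ+s) with h3 | h3
        · rw [hb3 u h2 h3]
          exact hCconv.add_smul_sub_mem hq hq'
            ⟨div_nonneg (by linarith) hs.le, (div_le_one hs).mpr (by linarith)⟩
        · rcases le_or_gt u (t-2*δ) with h4 | h4
          · rw [hb4 u h3 h4]; exact hq'
          · rcases le_or_gt u (t-δ) with h5 | h5
            · rw [hb5 u h4 h5]; exact hmem2 _ (abs_le.mpr ⟨by linarith, by linarith⟩)
            · rw [hb6 u h5]; exact hmem2 _ (abs_le.mpr ⟨by linarith, by linarith⟩)
  · -- differentiability away from F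
    intro u _ huF
    obtain ⟨c, hc⟩ := hkey u huF
    exact hc.self_of_nhds.differentiableAt
  · -- continuity of the derivative away from F
    intro u hu
    obtain ⟨c, hc⟩ := hkey u (by simpa using hu.2)
    have hderiv : deriv φ =ᶠ[nhds u] fun _ => c := hc.mono fun w hw => hw.deriv
    exact hderiv.continuousAt.continuousWithinAt
  · -- φ 0 = q
    rw [hb1 0 hδ.le]; simp
  · -- φ t = q'
    rw [hb6 t (by linarith)]; simp
  · -- right derivative at 0
    exact (hd1 0 (mem_Iio.mpr hδ)).hasDerivWithinAt
  · -- left derivative at t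
    exact (hd6 t (mem_Ioi.mpr (by linarith))).hasDerivWithinAt
  · -- the energy estimate
    have hKq : kinSq m (q' - q) = K := by
      rw [hKdef, show q - q' = -(q' - q) by abel, kinSq_neg]
    set g : ℝ → ℝ := fun u =>
      if u ≤ 2*δ then A else if u ≤ 2*δ+s then K/s^2 else if u ≤ t-2*δ then 0 else A'
      with hgdef
    have hcongr : ∫ u in (0:ℝ)..t, kinSq m (deriv φ u) = ∫ u in (0:ℝ)..t, g u := by
      refine intervalIntegral.integral_congr_ae ?_
      filter_upwards [ae_nmem_finset F] with u huF _
      have huF' : u ∉ F := by simpa using huF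
      simp only [hFdef, Finset.mem_insert, Finset.mem_singleton, not_or] at huF'
      obtain ⟨n1, n2, n3, n4, n5⟩ := huF'
      simp only [hgdef]
      rcases lt_or_gt_of_ne n1 with h | h
      · rw [(hd1 u h).deriv, if_pos (by linarith : u ≤ 2*δ)]
      · rcases lt_or_gt_of_ne n2 with h2 | h2
        · rw [(hd2 u ⟨h, h2⟩).deriv, kinSq_neg, if_pos h2.le]
        · rcases lt_or_gt_of_ne n3 with h3 | h3
          · rw [(hd3 u ⟨h2, h3⟩).deriv, kinSq_smul, hKq,
              if_neg (not_le.mpr h2), if_pos h3.le]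
            rw [div_pow, one_pow, div_mul_eq_mul_div, one_mul]
          · rcases lt_or_gt_of_ne n4 with h4 | h4
            · rw [(hd4 u ⟨h3, h4⟩).deriv, kinSq_zero,
                if_neg (by push_neg; linarith), if_neg (not_le.mpr h3), if_pos h4.le]
            · rcases lt_or_gt_of_ne n5 with h5 | h5
              · rw [(hd5 u ⟨h4, h5⟩).deriv, kinSq_neg,
                  if_neg (by push_neg; linarith), if_neg (by push_neg; linarith),
                  if_neg (not_le.mpr h4)]
              · rw [(hd6 u h5).deriv,
                  if_neg (by push_neg; linarith), if_neg (by push_neg; linarith),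
                  if_neg (by push_neg; linarith)]
    have hg1 : ∀ u ∈ Ioc (0:ℝ) (2*δ), g u = A := by
      intro u hu; simp only [hgdef]; rw [if_pos hu.2]
    have hg2 : ∀ u ∈ Ioc (2*δ) (2*δ+s), g u = K/s^2 := by
      intro u hu; simp only [hgdef]; rw [if_neg (not_le.mpr hu.1), if_pos hu.2]
    have hg3 : ∀ u ∈ Ioc (2*δ+s) (t-2*δ), g u = 0 := by
      intro u hu; simp only [hgdef]
      rw [if_neg (by push_neg; linarith [hu.1]), if_neg (not_le.mpr hu.1), if_pos hu.2]
    have hg4 : ∀ u ∈ Ioc (t-2*δ) t, g u = A' := by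
      intro u hu; simp only [hgdef]
      rw [if_neg (by push_neg; linarith [hu.1]), if_neg (by push_neg; linarith [hu.1]),
        if_neg (not_le.mpr hu.1)]
    have hle1 : (0:ℝ) ≤ 2*δ := by linarith
    have hle2 : 2*δ ≤ 2*δ+s := by linarith
    have hle3 : 2*δ+s ≤ t-2*δ := ho3
    have hle4 : t-2*δ ≤ t := by linarith
    have hi1 := intervalIntegrable_of_eqOn_Ioc hle1 hg1
    have hi2 := intervalIntegrable_of_eqOn_Ioc hle2 hg2
    have hi3 := intervalIntegrable_of_eqOn_Ioc hle3 hg3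
    have hi4 := intervalIntegrable_of_eqOn_Ioc hle4 hg4
    have hsplit : ∫ u in (0:ℝ)..t, g u =
        (∫ u in (0:ℝ)..(2*δ), g u) + ((∫ u in (2*δ)..(2*δ+s), g u)
          + ((∫ u in (2*δ+s)..(t-2*δ), g u) + ∫ u in (t-2*δ)..t, g u)) := by
      rw [intervalIntegral.integral_add_adjacent_intervals hi3 hi4,
        intervalIntegral.integral_add_adjacent_intervals hi2 (hi3.trans hi4),
        intervalIntegral.integral_add_adjacent_intervals hi1 ((hi2.trans hi3).trans hi4)]
    have hv1 := integral_of_eqOn_Ioc hle1 hg1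
    have hv2 := integral_of_eqOn_Ioc hle2 hg2
    have hv3 := integral_of_eqOn_Ioc hle3 hg3
    have hv4 := integral_of_eqOn_Ioc hle4 hg4
    have hmid : (2*δ+s - 2*δ) * (K/s^2) = E := by
      rw [show 2*δ+s - 2*δ = s by ring, ← hKs]
      field_simp
    have htot : ∫ u in (0:ℝ)..t, kinSq m (deriv φ u) = e + E := by
      rw [hcongr, hsplit, hv1, hv2, hv3, hv4, hmid, hedef]
      ring
    rw [htot]
    rcases le_total (v - e) (K/τ) with hc | hc
    · rw [hEdef, max_eq_right hc]
      have hub : K/τ ≤ v + ε/4 := by linarith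
      rw [abs_lt]
      constructor
      · linarith
      · linarith
    · rw [hEdef, max_eq_left hc]
      rw [show e + (v - e) - v = 0 by ring, abs_zero]
      exact hε
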